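/- arXiv:math/0211432 — 3 statements merged into one kernel-verified Lean document; each statement's English description precedes it below -/
import Mathlib

section
/- Let ξ(x) = x² ∑_{m≥0} C(3m,m)/(2m+1) · x^{3m} and ψ(x) = 1 − ∑_{m≥1} m!(6m)! / ((6m−1)·((2m)!)²·(3m)!) · x^{3m}/16^m, as power series over ℚ. Both ξ and ψ have radius of convergence exactly x_c = 4^{1/3}/3. -/
open Filter Topology Nat

/-- The coefficient of `xⁿ` in `ξ(x) = x² ∑_{m ≥ 0} C(3m, m)/(2m+1) x^{3m}`, as a real
number. -/
noncomputable def xiCoeffR (n : ℕ) : ℝ :=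
  if n % 3 = 2 then (Nat.choose (3 * (n / 3)) (n / 3) : ℝ) / (2 * (n / 3) + 1) else 0

/-- The coefficient of `xⁿ` in
`ψ(x) = 1 − ∑_{m ≥ 1} m!(6m)!/((6m−1)((2m)!)²(3m)!) · x^{3m}/16^m`, as a real number. -/
noncomputable def psiCoeffR (n : ℕ) : ℝ :=
  if n = 0 then 1
  else if n % 3 = 0 then
    -(((n / 3).factorial : ℝ) * ((6 * (n / 3)).factorial : ℝ) /
      ((6 * ((n / 3) : ℝ) - 1) * (((2 * (n / 3)).factorial : ℝ)) ^ 2 *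
        ((3 * (n / 3)).factorial : ℝ) * 16 ^ (n / 3)))
  else 0

/-- `x_c = 4^{1/3}/3`. -/
noncomputable def xc : ℝ := (4 : ℝ) ^ ((1 : ℝ) / 3) / 3

/-! ### Auxiliary lemmas -/

lemma tendsto_lin_div (a b c d : ℝ) (hc : 0 < c) :
    Tendsto (fun m : ℕ => (a * m + b) / (c * m + d)) atTop (𝓝 (a / c)) := by
  have h0 : Tendsto (fun m : ℕ => (1 : ℝ) / m) atTop (𝓝 0) :=
    tendsto_one_div_atTop_nhds_zero_nat
  have key : Tendsto (fun m : ℕ => (a + b * (1 / m)) / (c + d * (1 / m)))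
      atTop (𝓝 (a / c)) := by
    have h1 : Tendsto (fun m : ℕ => a + b * (1 / m)) atTop (𝓝 a) := by
      simpa using tendsto_const_nhds.add (tendsto_const_nhds.mul h0)
    have h2 : Tendsto (fun m : ℕ => c + d * (1 / m)) atTop (𝓝 c) := by
      simpa using tendsto_const_nhds.add (tendsto_const_nhds.mul h0)
    exact h1.div h2 hc.ne'
  refine key.congr' ?_
  filter_upwards [eventually_ge_atTop 1] with m hm
  have hm0 : (m : ℝ) ≠ 0 := Nat.cast_ne_zero.mpr (by omega)
  field_simp

lemma choose_ratio (m : ℕ) :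
    (Nat.choose (3 * (m+1)) (m+1) : ℝ) * ((m+1) * (2*m+1) * (2*m+2)) =
      (Nat.choose (3 * m) m : ℝ) * ((3*m+1) * (3*m+2) * (3*m+3)) := by
  have h1 : ((3 * m).choose m : ℝ) = (3*m)! / (m ! * (2*m)!) := by
    rw [Nat.cast_choose ℝ (by omega : m ≤ 3 * m), show 3*m - m = 2*m from by omega]
  have h2 : ((3 * (m+1)).choose (m+1) : ℝ) = (3*m+3)! / ((m+1)! * (2*m+2)!) := by
    rw [Nat.cast_choose ℝ (by omega : m + 1 ≤ 3 * (m+1)),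
      show 3*(m+1) - (m+1) = 2*m+2 from by omega, show 3*(m+1) = 3*m+3 from by omega]
  have e1 : ((3*m+3)! : ℝ) = (3*m+3) * (3*m+2) * (3*m+1) * (3*m)! := by
    have : (3*m+3)! = (3*m+3) * ((3*m+2) * ((3*m+1) * (3*m)!)) := rfl
    rw [this]; push_cast; ring
  have e2 : ((m+1)! : ℝ) = (m+1) * m ! := by
    rw [Nat.factorial_succ]; push_cast; ring
  have e3 : ((2*m+2)! : ℝ) = (2*m+2) * (2*m+1) * (2*m)! := by
    have : (2*m+2)! = (2*m+2) * ((2*m+1) * (2*m)!) := rfl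
    rw [this]; push_cast; ring
  rw [h1, h2, e1, e2, e3]
  have f1 : (m ! : ℝ) ≠ 0 := by positivity
  have f2 : ((2*m)! : ℝ) ≠ 0 := by positivity
  have hm1 : ((m:ℝ)+1) ≠ 0 := by positivity
  have h21 : (2*(m:ℝ)+1) ≠ 0 := by positivity
  have h22 : (2*(m:ℝ)+2) ≠ 0 := by positivity
  field_simp

lemma xi_at (m : ℕ) :
    xiCoeffR (3 * m + 2) = 3 * (Nat.choose (3 * m) m : ℝ) / (6 * m + 7) := by
  have h1 : (3 * m + 2) % 3 = 2 := by omega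
  have h2 : (3 * m + 2) / 3 = m := by omega
  simp only [xiCoeffR, h1, if_pos, h2]
  push_cast
  have : (6 * (m:ℝ) + 7) ≠ 0 := by positivity
  field_simp
  ring

lemma hxc_pos : 0 < xc := by
  unfold xc
  positivity

lemma hxc_cube : xc ^ 3 = 4 / 27 := by
  unfold xc
  rw [div_pow]
  norm_num
  rw [← Real.rpow_natCast ((4:ℝ) ^ ((1:ℝ)/3)) 3, ← Real.rpow_mul (by norm_num : (0:ℝ) ≤ 4)]
  norm_num

/-- The auxiliary positive coefficient for `ψ`. -/
noncomputable def psiB (m : ℕ) : ℝ :=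
  (m ! : ℝ) * ((6 * m)! : ℝ) /
    ((6 * (m:ℝ) - 1) * (((2 * m)! : ℝ)) ^ 2 * ((3 * m)! : ℝ) * 16 ^ m)

lemma psi_at (m : ℕ) : psiCoeffR (3 * m) = -psiB m := by
  rcases Nat.eq_zero_or_pos m with rfl | hm
  · norm_num [psiCoeffR, psiB]
  · have h0 : 3 * m ≠ 0 := by omega
    have h1 : (3 * m) % 3 = 0 := by omega
    have h2 : (3 * m) / 3 = m := by omega
    have h3 : ((3*m : ℕ):ℝ)/3 = (m:ℝ) := by push_cast; ring
    simp only [psiCoeffR, psiB, h0, if_false, h1, if_pos, h2, if_neg, h3]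

lemma psiB_pos {m : ℕ} (hm : 1 ≤ m) : 0 < psiB m := by
  have h6 : (0:ℝ) < 6 * (m:ℝ) - 1 := by
    have : (1:ℝ) ≤ (m:ℝ) := by exact_mod_cast hm
    nlinarith
  unfold psiB
  positivity

lemma psiB_ratio (m : ℕ) (hm : 1 ≤ m) :
    psiB (m+1) = psiB m *
      ((((m:ℝ)+1) / (2*m+1)) * ((6*(m:ℝ)+1) / (2*m+1)) * ((6*(m:ℝ)+2) / (2*m+2)) *
       ((6*(m:ℝ)+3) / (2*m+2)) * ((6*(m:ℝ)+4) / (3*m+1)) * ((6*(m:ℝ)+6) / (3*m+2)) *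
       ((6*(m:ℝ)-1) / (3*m+3)) * (1/16)) := by
  have h6 : (0:ℝ) < 6 * (m:ℝ) - 1 := by
    have : (1:ℝ) ≤ (m:ℝ) := by exact_mod_cast hm
    nlinarith
  have e1 : ((m+1)! : ℝ) = (m+1) * m ! := by
    rw [Nat.factorial_succ]; push_cast; ring
  have e2 : ((6*(m+1))! : ℝ) =
      (6*m+6) * (6*m+5) * (6*m+4) * (6*m+3) * (6*m+2) * (6*m+1) * (6*m)! := by
    rw [show 6*(m+1) = 6*m+6 from by ring]
    have : (6*m+6)! = (6*m+6) * ((6*m+5) * ((6*m+4) * ((6*m+3) * ((6*m+2) *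
        ((6*m+1) * (6*m)!))))) := rfl
    rw [this]; push_cast; ring
  have e3 : ((2*(m+1))! : ℝ) = (2*m+2) * (2*m+1) * (2*m)! := by
    rw [show 2*(m+1) = 2*m+2 from by ring]
    have : (2*m+2)! = (2*m+2) * ((2*m+1) * (2*m)!) := rfl
    rw [this]; push_cast; ring
  have e4 : ((3*(m+1))! : ℝ) = (3*m+3) * (3*m+2) * (3*m+1) * (3*m)! := by
    rw [show 3*(m+1) = 3*m+3 from by ring]
    have : (3*m+3)! = (3*m+3) * ((3*m+2) * ((3*m+1) * (3*m)!)) := rfl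
    rw [this]; push_cast; ring
  have e5 : (16:ℝ) ^ (m+1) = 16 * 16 ^ m := by rw [pow_succ]; ring
  have e6 : 6 * ((m:ℝ)+1) - 1 = 6*(m:ℝ)+5 := by ring
  unfold psiB
  rw [e1, e2, e3, e4, e5]
  push_cast
  rw [e6]
  have f1 : (m ! : ℝ) ≠ 0 := by positivity
  have f2 : ((6*m)! : ℝ) ≠ 0 := by positivity
  have f3 : ((2*m)! : ℝ) ≠ 0 := by positivity
  have f4 : ((3*m)! : ℝ) ≠ 0 := by positivity
  have f5 : ((16:ℝ)) ^ m ≠ 0 := by positivity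
  have f6 : (6*(m:ℝ)-1) ≠ 0 := h6.ne'
  have f7 : (6*(m:ℝ)+5) ≠ 0 := by positivity
  have f8 : (2*(m:ℝ)+1) ≠ 0 := by positivity
  have f9 : (2*(m:ℝ)+2) ≠ 0 := by positivity
  have f10 : (3*(m:ℝ)+1) ≠ 0 := by positivity
  have f11 : (3*(m:ℝ)+2) ≠ 0 := by positivity
  have f12 : (3*(m:ℝ)+3) ≠ 0 := by positivity
  field_simp
  ring
  have f6' : (-1 + (m:ℝ)*6) ≠ 0 := by intro h; apply f6; linarith
  field_simp
  ring

/-- The ratio sequence for `ξ`. -/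
noncomputable def FxiT (x : ℝ) (m : ℕ) : ℝ :=
  ((3*(m:ℝ)+1)/((m:ℝ)+1)) * ((3*(m:ℝ)+2)/(2*(m:ℝ)+1)) * ((3*(m:ℝ)+3)/(2*(m:ℝ)+2)) *
    ((6*(m:ℝ)+7)/(6*(m:ℝ)+13)) * |x|^3

lemma tendsto_Fxi (x : ℝ) : Tendsto (FxiT x) atTop (𝓝 (27/4 * |x|^3)) := by
  have h1 : Tendsto (fun m : ℕ => (3*(m:ℝ)+1)/((m:ℝ)+1)) atTop (𝓝 (3/1)) := by
    simpa using tendsto_lin_div 3 1 1 1 one_pos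
  have h2 : Tendsto (fun m : ℕ => (3*(m:ℝ)+2)/(2*(m:ℝ)+1)) atTop (𝓝 (3/2)) :=
    tendsto_lin_div 3 2 2 1 two_pos
  have h3 : Tendsto (fun m : ℕ => (3*(m:ℝ)+3)/(2*(m:ℝ)+2)) atTop (𝓝 (3/2)) :=
    tendsto_lin_div 3 3 2 2 two_pos
  have h4 : Tendsto (fun m : ℕ => (6*(m:ℝ)+7)/(6*(m:ℝ)+13)) atTop (𝓝 (6/6)) :=
    tendsto_lin_div 6 7 6 13 (by norm_num)
  have h := (((h1.mul h2).mul h3).mul h4).mul (tendsto_const_nhds (x := |x|^3))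
  have e : (27/4 : ℝ) * |x|^3 = 3/1 * (3/2) * (3/2) * (6/6) * |x|^3 := by norm_num
  rw [e]
  exact h

/-- The ratio sequence for `ψ`. -/
noncomputable def FpsiT (x : ℝ) (m : ℕ) : ℝ :=
  ((((m:ℝ)+1) / (2*(m:ℝ)+1)) * ((6*(m:ℝ)+1) / (2*(m:ℝ)+1)) * ((6*(m:ℝ)+2) / (2*(m:ℝ)+2)) *
   ((6*(m:ℝ)+3) / (2*(m:ℝ)+2)) * ((6*(m:ℝ)+4) / (3*(m:ℝ)+1)) * ((6*(m:ℝ)+6) / (3*(m:ℝ)+2)) *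
   ((6*(m:ℝ)-1) / (3*(m:ℝ)+3))) * (|x|^3/16)

lemma tendsto_Fpsi (x : ℝ) : Tendsto (FpsiT x) atTop (𝓝 (27/4 * |x|^3)) := by
  have h1 : Tendsto (fun m : ℕ => ((m:ℝ)+1)/(2*(m:ℝ)+1)) atTop (𝓝 (1/2)) := by
    simpa using tendsto_lin_div 1 1 2 1 two_pos
  have h2 : Tendsto (fun m : ℕ => (6*(m:ℝ)+1)/(2*(m:ℝ)+1)) atTop (𝓝 (6/2)) :=
    tendsto_lin_div 6 1 2 1 two_pos
  have h3 : Tendsto (fun m : ℕ => (6*(m:ℝ)+2)/(2*(m:ℝ)+2)) atTop (𝓝 (6/2)) :=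
    tendsto_lin_div 6 2 2 2 two_pos
  have h4 : Tendsto (fun m : ℕ => (6*(m:ℝ)+3)/(2*(m:ℝ)+2)) atTop (𝓝 (6/2)) :=
    tendsto_lin_div 6 3 2 2 two_pos
  have h5 : Tendsto (fun m : ℕ => (6*(m:ℝ)+4)/(3*(m:ℝ)+1)) atTop (𝓝 (6/3)) :=
    tendsto_lin_div 6 4 3 1 three_pos
  have h6 : Tendsto (fun m : ℕ => (6*(m:ℝ)+6)/(3*(m:ℝ)+2)) atTop (𝓝 (6/3)) :=
    tendsto_lin_div 6 6 3 2 three_pos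
  have h7 : Tendsto (fun m : ℕ => (6*(m:ℝ)-1)/(3*(m:ℝ)+3)) atTop (𝓝 (6/3)) := by
    simpa [sub_eq_add_neg] using tendsto_lin_div 6 (-1) 3 3 three_pos
  have h := ((((((h1.mul h2).mul h3).mul h4).mul h5).mul h6).mul h7).mul
    (tendsto_const_nhds (x := |x|^3/16))
  have e : (27/4 : ℝ) * |x|^3 =
      1/2 * (6/2) * (6/2) * (6/2) * (6/3) * (6/3) * (6/3) * (|x|^3/16) := by ring
  rw [e]
  exact h

lemma xi_ratio (x : ℝ) (hx : x ≠ 0) (m : ℕ) :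
    ‖xiCoeffR (3*(m+1)+2) * x^(3*(m+1)+2)‖ / ‖xiCoeffR (3*m+2) * x^(3*m+2)‖ = FxiT x m := by
  have hC : (0:ℝ) < Nat.choose (3*m) m := by
    exact_mod_cast Nat.choose_pos (by omega : m ≤ 3*m)
  have hC' : (0:ℝ) < Nat.choose (3*(m+1)) (m+1) := by
    exact_mod_cast Nat.choose_pos (by omega : m+1 ≤ 3*(m+1))
  have hxa : (0:ℝ) < |x| := abs_pos.mpr hx
  rw [xi_at, xi_at, Real.norm_eq_abs, Real.norm_eq_abs, abs_mul, abs_mul, abs_pow, abs_pow,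
    abs_of_pos (show (0:ℝ) < 3 * (Nat.choose (3*(m+1)) (m+1) : ℝ) / (6*((m+1):ℕ)+7) by positivity),
    abs_of_pos (show (0:ℝ) < 3 * (Nat.choose (3*m) m : ℝ) / (6*(m:ℕ)+7) by positivity)]
  have hexp : |x|^(3*(m+1)+2) = |x|^(3*m+2) * |x|^3 := by
    rw [show 3*(m+1)+2 = 3*m+2+3 from by ring, pow_add]
  have hsub : (Nat.choose (3*(m+1)) (m+1) : ℝ) =
      (Nat.choose (3*m) m : ℝ) * ((3*(m:ℝ)+1)*(3*(m:ℝ)+2)*(3*(m:ℝ)+3)) /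
        (((m:ℝ)+1)*(2*(m:ℝ)+1)*(2*(m:ℝ)+2)) := by
    rw [eq_div_iff (by positivity)]
    linear_combination choose_ratio m
  rw [hexp, hsub]
  unfold FxiT
  push_cast
  have n1 : ((m:ℝ)+1) ≠ 0 := by positivity
  have n2 : (2*(m:ℝ)+1) ≠ 0 := by positivity
  have n3 : (2*(m:ℝ)+2) ≠ 0 := by positivity
  have n4 : (6*(m:ℝ)+7) ≠ 0 := by positivity
  have n5 : (6*(m:ℝ)+13) ≠ 0 := by positivity
  have n6 : (6*((m:ℝ)+1)+7) ≠ 0 := by positivity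
  have n7 : |x|^(3*m+2) ≠ 0 := pow_ne_zero _ hxa.ne'
  have n8 : (Nat.choose (3*m) m : ℝ) ≠ 0 := hC.ne'
  field_simp
  ring

lemma psi_ratio (x : ℝ) (hx : x ≠ 0) (m : ℕ) (hm : 1 ≤ m) :
    ‖psiCoeffR (3*(m+1)) * x^(3*(m+1))‖ / ‖psiCoeffR (3*m) * x^(3*m)‖ = FpsiT x m := by
  have hb := psiB_pos hm
  have hb' := psiB_pos (show 1 ≤ m+1 by omega)
  have hxa : (0:ℝ) < |x| := abs_pos.mpr hx
  rw [psi_at, psi_at, Real.norm_eq_abs, Real.norm_eq_abs, abs_mul, abs_mul, abs_pow, abs_pow,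
    abs_neg, abs_neg, abs_of_pos hb, abs_of_pos hb']
  have hexp : |x|^(3*(m+1)) = |x|^(3*m) * |x|^3 := by
    rw [show 3*(m+1) = 3*m+3 from by ring, pow_add]
  rw [hexp, psiB_ratio m hm]
  unfold FpsiT
  have n1 : (2*(m:ℝ)+1) ≠ 0 := by positivity
  have n2 : (2*(m:ℝ)+2) ≠ 0 := by positivity
  have n3 : (3*(m:ℝ)+1) ≠ 0 := by positivity
  have n4 : (3*(m:ℝ)+2) ≠ 0 := by positivity
  have n5 : (3*(m:ℝ)+3) ≠ 0 := by positivity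
  have n6 : |x|^(3*m) ≠ 0 := pow_ne_zero _ hxa.ne'
  have n7 : psiB m ≠ 0 := hb.ne'
  field_simp

/-! ### The main theorem -/

/-- Both `ξ` and `ψ` have radius of convergence exactly `x_c = 4^{1/3}/3`: the series
converge for `|x| < x_c` and diverge for `|x| > x_c`. -/
theorem xi_psi_radius :
    (∀ x : ℝ, |x| < xc → Summable fun n => xiCoeffR n * x ^ n) ∧
    (∀ x : ℝ, xc < |x| → ¬ Summable fun n => xiCoeffR n * x ^ n) ∧
    (∀ x : ℝ, |x| < xc → Summable fun n => psiCoeffR n * x ^ n) ∧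
    (∀ x : ℝ, xc < |x| → ¬ Summable fun n => psiCoeffR n * x ^ n) := by
  have hxiI : Function.Injective (fun m : ℕ => 3*m+2) := by
    intro a b h
    simp only at h
    omega
  have hpsiI : Function.Injective (fun m : ℕ => 3*m) := by
    intro a b h
    simp only at h
    omega
  have hxi0 : ∀ x : ℝ, ∀ n ∉ Set.range (fun m : ℕ => 3*m+2), xiCoeffR n * x^n = 0 := by
    intro x n hn
    have hmod : n % 3 ≠ 2 := by
      intro h
      exact hn ⟨n/3, show 3*(n/3)+2 = n by omega⟩
    simp [xiCoeffR, hmod]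
  have hpsi0 : ∀ x : ℝ, ∀ n ∉ Set.range (fun m : ℕ => 3*m), psiCoeffR n * x^n = 0 := by
    intro x n hn
    have h1 : n ≠ 0 := by
      intro h
      exact hn ⟨0, show 3*0 = n by omega⟩
    have h2 : n % 3 ≠ 0 := by
      intro h
      exact hn ⟨n/3, show 3*(n/3) = n by omega⟩
    simp [psiCoeffR, h1, h2]
  have hratio_xi : ∀ x : ℝ, x ≠ 0 →
      Tendsto (fun m : ℕ => ‖xiCoeffR (3*(m+1)+2) * x^(3*(m+1)+2)‖ /
        ‖xiCoeffR (3*m+2) * x^(3*m+2)‖) atTop (𝓝 (27/4 * |x|^3)) := by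
    intro x hx
    exact Tendsto.congr (fun m => (xi_ratio x hx m).symm) (tendsto_Fxi x)
  have hratio_psi : ∀ x : ℝ, x ≠ 0 →
      Tendsto (fun m : ℕ => ‖psiCoeffR (3*(m+1)) * x^(3*(m+1))‖ /
        ‖psiCoeffR (3*m) * x^(3*m)‖) atTop (𝓝 (27/4 * |x|^3)) := by
    intro x hx
    refine (tendsto_Fpsi x).congr' ?_
    filter_upwards [eventually_ge_atTop 1] with m hm
    exact (psi_ratio x hx m hm).symm
  have hlt : ∀ x : ℝ, |x| < xc → 27/4 * |x|^3 < 1 := by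
    intro x h
    have h3 : |x|^3 < xc^3 := by
      apply pow_lt_pow_left₀ h (abs_nonneg x)
      norm_num
    rw [hxc_cube] at h3
    nlinarith
  have hgt : ∀ x : ℝ, xc < |x| → 1 < 27/4 * |x|^3 := by
    intro x h
    have h3 : xc^3 < |x|^3 := by
      apply pow_lt_pow_left₀ h hxc_pos.le
      norm_num
    rw [hxc_cube] at h3
    nlinarith
  refine ⟨?_, ?_, ?_, ?_⟩
  · -- ξ summable
    intro x hxlt
    by_cases hx : x = 0
    · subst hx
      apply summable_of_ne_finset_zero (s := (∅ : Finset ℕ))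
      intro n _
      rcases Nat.eq_zero_or_pos n with rfl | hn
      · simp [xiCoeffR]
      · simp [zero_pow hn.ne']
    · refine (hxiI.summable_iff (hxi0 x)).mp ?_
      refine summable_of_ratio_test_tendsto_lt_one
        (f := (fun n => xiCoeffR n * x ^ n) ∘ fun m : ℕ => 3*m+2)
        (hlt x hxlt) ?_ (hratio_xi x hx)
      filter_upwards with m
      show xiCoeffR (3*m+2) * x^(3*m+2) ≠ 0
      rw [xi_at]
      have hC : (0:ℝ) < Nat.choose (3*m) m := by
        exact_mod_cast Nat.choose_pos (by omega : m ≤ 3*m)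
      exact mul_ne_zero (by positivity) (pow_ne_zero _ hx)
  · -- ξ not summable
    intro x hxgt hsum
    have hx : x ≠ 0 := by
      intro h
      rw [h, abs_zero] at hxgt
      exact absurd hxgt (not_lt.mpr hxc_pos.le)
    exact not_summable_of_ratio_test_tendsto_gt_one
      (f := (fun n => xiCoeffR n * x ^ n) ∘ fun m : ℕ => 3*m+2)
      (hgt x hxgt) (hratio_xi x hx) ((hxiI.summable_iff (hxi0 x)).mpr hsum)
  · -- ψ summable
    intro x hxlt
    by_cases hx : x = 0
    · subst hx
      apply summable_of_ne_finset_zero (s := ({0} : Finset ℕ))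
      intro n hn
      have hn0 : n ≠ 0 := by simpa using hn
      simp [zero_pow hn0]
    · refine (hpsiI.summable_iff (hpsi0 x)).mp ?_
      refine summable_of_ratio_test_tendsto_lt_one
        (f := (fun n => psiCoeffR n * x ^ n) ∘ fun m : ℕ => 3*m)
        (hlt x hxlt) ?_ (hratio_psi x hx)
      filter_upwards [eventually_ge_atTop 1] with m hm
      show psiCoeffR (3*m) * x^(3*m) ≠ 0
      rw [psi_at]
      exact mul_ne_zero (neg_ne_zero.mpr (psiB_pos hm).ne') (pow_ne_zero _ hx)
  · -- ψ not summable
    intro x hxgt hsum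
    have hx : x ≠ 0 := by
      intro h
      rw [h, abs_zero] at hxgt
      exact absurd hxgt (not_lt.mpr hxc_pos.le)
    exact not_summable_of_ratio_test_tendsto_gt_one
      (f := (fun n => psiCoeffR n * x ^ n) ∘ fun m : ℕ => 3*m)
      (hgt x hxgt) (hratio_psi x hx) ((hpsiI.summable_iff (hpsi0 x)).mpr hsum)
end

section
/- For every nonzero complex number x, at least one complex root y of the cubic equation y³ − x·y + x³ = 0 satisfies |y| > |x|. -/
open Complex Polynomial

/-- For every nonzero complex `x`, at least one root `y` of the kernel equation
`y³ − xy + x³ = 0` satisfies `|y| > |x|`. -/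
theorem kernel_root_large_modulus (x : ℂ) (hx : x ≠ 0) :
    ∃ y : ℂ, y ^ 3 - x * y + x ^ 3 = 0 ∧ ‖x‖ < ‖y‖ := by
  -- get one root of the cubic
  obtain ⟨y1, h1⟩ : ∃ y1 : ℂ, y1 ^ 3 - x * y1 + x ^ 3 = 0 := by
    have hd : (X ^ 3 - C x * X + C (x ^ 3) : ℂ[X]).degree = 3 := by
      compute_degree!
    obtain ⟨z, hz⟩ := Complex.exists_root (f := X ^ 3 - C x * X + C (x ^ 3))
      (by rw [hd]; norm_num)
    exact ⟨z, by simpa [Polynomial.IsRoot] using hz⟩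
  obtain ⟨s, hs⟩ : ∃ s : ℂ, s ^ 2 = 4 * x - 3 * y1 ^ 2 :=
    IsAlgClosed.exists_pow_nat_eq _ (by norm_num)
  set y2 : ℂ := (-y1 + s) / 2 with hy2
  set y3 : ℂ := (-y1 - s) / 2 with hy3
  have h2 : y2 ^ 3 - x * y2 + x ^ 3 = 0 := by
    rw [hy2]; linear_combination (((-y1 + s) / 2 - y1) / 4) * hs + h1
  have h3 : y3 ^ 3 - x * y3 + x ^ 3 = 0 := by
    rw [hy3]; linear_combination (((-y1 - s) / 2 - y1) / 4) * hs + h1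
  have hprod : y1 * y2 * y3 = -x ^ 3 := by
    rw [hy2, hy3]; linear_combination (-y1 / 4) * hs + h1
  have he2 : y1 * y2 + y1 * y3 + y2 * y3 = -x := by
    rw [hy2, hy3]; linear_combination (-1 / 4 : ℂ) * hs
  have hsum : y1 + y2 + y3 = 0 := by rw [hy2, hy3]; ring
  have hx3 : y1 * y2 * y3 ≠ 0 := by rw [hprod]; simpa using pow_ne_zero 3 hx
  have hn1 : y1 ≠ 0 := fun h => hx3 (by simp [h])
  have hn2 : y2 ≠ 0 := fun h => hx3 (by simp [h])
  have hn3 : y3 ≠ 0 := fun h => hx3 (by simp [h])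
  by_contra hcon
  push_neg at hcon
  have b1 := hcon y1 h1
  have b2 := hcon y2 h2
  have b3 := hcon y3 h3
  have habs : ‖y1‖ * ‖y2‖ * ‖y3‖ = ‖x‖ ^ 3 := by
    rw [← norm_mul, ← norm_mul, hprod]; simp
  have p1 := (norm_pos_iff.mpr hn1)
  have p2 := (norm_pos_iff.mpr hn2)
  have p3 := (norm_pos_iff.mpr hn3)
  have hX := norm_pos_iff.mpr hx
  have step : ∀ a b c : ℝ, 0 < a → 0 < b → 0 < c →
      a * b * c = ‖x‖ ^ 3 → b ≤ ‖x‖ → c ≤ ‖x‖ →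
      ‖x‖ ≤ a := by
    intro a b c ha hb hc hp hb' hc'
    by_contra h
    push_neg at h
    have h23 : b * c ≤ ‖x‖ * ‖x‖ :=
      mul_le_mul hb' hc' hc.le (norm_nonneg x)
    nlinarith [mul_le_mul_of_nonneg_left h23 ha.le,
      mul_lt_mul_of_pos_right h (mul_pos hX hX)]
  have e1 : ‖y1‖ = ‖x‖ :=
    le_antisymm b1 (step _ _ _ p1 p2 p3 habs b2 b3)
  have e2' : ‖y2‖ = ‖x‖ :=
    le_antisymm b2 (step _ _ _ p2 p1 p3 (by linarith [habs]; ) b1 b3)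
  have e3' : ‖y3‖ = ‖x‖ :=
    le_antisymm b3 (step _ _ _ p3 p1 p2 (by linarith [habs]) b1 b2)
  -- conjugates
  have hc : ∀ z : ℂ, ‖z‖ = ‖x‖ →
      (starRingEnd ℂ) z * z = (‖x‖ : ℂ) ^ 2 := by
    intro z hz
    rw [mul_comm, Complex.mul_conj]
    norm_cast
    rw [Complex.normSq_eq_norm_sq, hz]
  have hc1 := hc y1 e1
  have hc2 := hc y2 e2'
  have hc3 := hc y3 e3'
  have hconjsum : (starRingEnd ℂ) y1 + (starRingEnd ℂ) y2 + (starRingEnd ℂ) y3 = 0 := by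
    rw [← map_add, ← map_add, hsum, map_zero]
  have key : (‖x‖ : ℂ) ^ 2 * x = 0 := by
    linear_combination (y2 * y3) * hc1 + y1 * y3 * hc2 + y1 * y2 * hc3 -
      (y1 * y2 * y3) * hconjsum + ((‖x‖ : ℂ) ^ 2) * he2
  have hax : (‖x‖ : ℂ) ≠ 0 := by
    simpa using (norm_ne_zero_iff.mpr hx)
  apply hx
  have := mul_eq_zero.mp key
  rcases this with h | h
  · exact absurd h (pow_ne_zero 2 hax)
  · simpa using h
end

section
/- Let Q_{i,j} be the number of knight walks ending at (i,j), and let S(z) = ∑_{i≥0} Q_{3i,0} z^{i+1} ∈ ℚ[[z]] (so that S(z³) = G(z) with G(x) = x³∑_i Q_{i,0}x^i). Let √(1−4t²) denote the power series (1−4t²)^{1/2} ∈ ℚ[[t]] with constant term 1, and U(t) = (1 − √(1−4t²))/(2t) ∈ ℚ[[t]]. Then the following identity holds in ℚ[[t]]: ∑_{i≥0} Q_{i,i} t^{2i+2} = ( t⁴ − 2·S(t³·U(t)) ) / √(1−4t²). -/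
/-- `w : Fin (n+1) → ℤ × ℤ` is a knight walk of length `n`: it starts at `(1,1)`, takes its
steps in `{(-1,2), (2,-1)}` and all its vertices have nonnegative coordinates. -/
def IsKnightWalk (n : ℕ) (w : Fin (n + 1) → ℤ × ℤ) : Prop :=
  w 0 = (1, 1) ∧
  (∀ k : Fin n, w k.succ - w k.castSucc ∈ ({(-1, 2), (2, -1)} : Set (ℤ × ℤ))) ∧
  ∀ k, 0 ≤ (w k).1 ∧ 0 ≤ (w k).2

/-- `Q i j` is the number of knight walks (of any length) ending at `(i, j)`. -/
noncomputable def Q (i j : ℕ) : ℕ :=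
  Nat.card {p : Σ n : ℕ, Fin (n + 1) → ℤ × ℤ //
    IsKnightWalk p.1 p.2 ∧ p.2 (Fin.last p.1) = ((i : ℤ), (j : ℤ))}

/-- `S(z) = ∑_{i ≥ 0} Q_{3i,0} z^{i+1}`, so that `S(z³) = G(z)`. -/
noncomputable def Sser : PowerSeries ℚ :=
  PowerSeries.mk fun n => if 1 ≤ n then (Q (3 * (n - 1)) 0 : ℚ) else 0

/-- `∑_{i ≥ 0} Q_{i,i} t^{2i+2}`, the generating function of knight walks ending on the
main diagonal (a walk ending at `(i,i)` has length `2i − 2`, whence the shift by `t²`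
coming from `t⁻²Q(tx, tx̄)` in the derivation). -/
noncomputable def diagSer : PowerSeries ℚ :=
  PowerSeries.mk fun n =>
    if 2 ≤ n ∧ n % 2 = 0 then (Q ((n - 2) / 2) ((n - 2) / 2) : ℚ) else 0

/-- Composition `F(f)` of formal power series; this is the usual composition whenever `f`
has zero constant term. -/
noncomputable def composePS (F f : PowerSeries ℚ) : PowerSeries ℚ :=
  PowerSeries.mk fun N => PowerSeries.coeff N
    (∑ k ∈ Finset.range (N + 1), PowerSeries.C (PowerSeries.coeff k F) * f ^ k)

namespace KnightAux


/-- constrained ±1 walk counts: walks e₀=0, steps ±1, with `3|e_k| ≤ k+2` at every time. -/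
def c : ℕ → ℤ → ℕ
  | 0, e => if e = 0 then 1 else 0
  | (n+1), e => if 3 * |e| ≤ (n : ℤ) + 3 then c n (e - 1) + c n (e + 1) else 0

/-- unconstrained ±1 walk counts from 0. -/
def q : ℕ → ℤ → ℕ
  | 0, e => if e = 0 then 1 else 0
  | (n+1), e => q n (e - 1) + q n (e + 1)

/-- boundary counts: `a' mm = c (3(mm+1)-2) (mm+1)`. -/
def a' (mm : ℕ) : ℕ := c (3*mm+1) (mm+1)

lemma c_neg (n : ℕ) : ∀ e : ℤ, c n (-e) = c n e := by
  induction n with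
  | zero => intro e; simp [c, neg_eq_zero]
  | succ n ih =>
      intro e
      simp only [c, abs_neg]
      rw [show -e - 1 = -(e+1) by ring, show -e + 1 = -(e-1) by ring, ih, ih]
      split <;> [exact Nat.add_comm _ _; rfl]

lemma c_bound {n : ℕ} : ∀ {e : ℤ}, (n : ℤ) + 2 < 3 * |e| → c n e = 0 := by
  induction n with
  | zero =>
      intro e h
      have : e ≠ 0 := by rintro rfl; simp at h
      simp [c, this]
  | succ n ih =>
      intro e h
      simp only [c]
      split
      · rename_i hle
        push_cast at h
        have h1 : (n : ℤ) + 2 < 3 * |e - 1| := by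
          rcases abs_cases e with ⟨he, h0⟩ | ⟨he, h0⟩ <;> rcases abs_cases (e-1) with ⟨h1, _⟩ | ⟨h1, _⟩ <;> omega
        have h2 : (n : ℤ) + 2 < 3 * |e + 1| := by
          rcases abs_cases e with ⟨he, h0⟩ | ⟨he, h0⟩ <;> rcases abs_cases (e+1) with ⟨h1, _⟩ | ⟨h1, _⟩ <;> omega
        rw [ih h1, ih h2]
      · rfl

lemma c_parity {n : ℕ} : ∀ {e : ℤ}, ¬ ((2:ℤ) ∣ (e - n)) → c n e = 0 := by
  induction n with
  | zero =>
      intro e h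
      have : e ≠ 0 := by rintro rfl; simp at h
      simp [c, this]
  | succ n ih =>
      intro e h
      simp only [c]
      split
      · have h1 : ¬ ((2:ℤ) ∣ (e - 1 - n)) := by
          push_cast at h ⊢; omega
        have h2 : ¬ ((2:ℤ) ∣ (e + 1 - n)) := by
          push_cast at h ⊢; omega
        rw [ih h1, ih h2]
      · rfl

lemma q_neg (n : ℕ) : ∀ e : ℤ, q n (-e) = q n e := by
  induction n with
  | zero => intro e; simp [q, neg_eq_zero]
  | succ n ih =>
      intro e
      simp only [q]
      rw [show -e - 1 = -(e+1) by ring, show -e + 1 = -(e-1) by ring, ih, ih]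
      exact Nat.add_comm _ _

lemma q_zero_of_ne {e : ℤ} (h : e ≠ 0) : q 0 e = 0 := by simp [q, h]

/-- The main decomposition identity (first-violation decomposition, proven by recurrences). -/
theorem zeta : ∀ (n : ℕ) (e : ℤ), q n e = c n e +
    ∑ mm ∈ Finset.range (n+1), (if 3*mm + 2 ≤ n then
      a' mm * (q (n - (3*mm+2)) (e - (mm+2)) + q (n - (3*mm+2)) (e + (mm+2))) else 0) := by
  intro n
  induction n with
  | zero =>
      intro e
      simp [q, c]
  | succ n ih =>
      intro e
      have lhs : q (n+1) e = q n (e-1) + q n (e+1) := rfl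
      rw [lhs, ih (e-1), ih (e+1)]
      have hsplit : (∑ mm ∈ Finset.range (n+1+1), (if 3*mm + 2 ≤ n+1 then
            a' mm * (q (n+1 - (3*mm+2)) (e - (mm+2)) + q (n+1 - (3*mm+2)) (e + (mm+2))) else 0))
          = (∑ mm ∈ Finset.range (n+1), (if 3*mm + 2 ≤ n then
              a' mm * (q (n - (3*mm+2)) (e-1 - (mm+2)) + q (n - (3*mm+2)) (e-1 + (mm+2))) else 0))
          + (∑ mm ∈ Finset.range (n+1), (if 3*mm + 2 ≤ n then
              a' mm * (q (n - (3*mm+2)) (e+1 - (mm+2)) + q (n - (3*mm+2)) (e+1 + (mm+2))) else 0))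
          + ∑ mm ∈ Finset.range (n+1+1), (if 3*mm + 2 = n+1 then
              a' mm * (q 0 (e - (mm+2)) + q 0 (e + (mm+2))) else 0) := by
        have ext1 : ∀ (d : ℤ), (∑ mm ∈ Finset.range (n+1), (if 3*mm + 2 ≤ n then
              a' mm * (q (n - (3*mm+2)) (d - (mm+2)) + q (n - (3*mm+2)) (d + (mm+2))) else 0))
            = (∑ mm ∈ Finset.range (n+1+1), (if 3*mm + 2 ≤ n then
              a' mm * (q (n - (3*mm+2)) (d - (mm+2)) + q (n - (3*mm+2)) (d + (mm+2))) else 0)) := by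
          intro d
          conv_rhs => rw [Finset.sum_range_succ]
          rw [if_neg (by omega : ¬ 3*(n+1) + 2 ≤ n), add_zero]
        rw [ext1, ext1, ← Finset.sum_add_distrib, ← Finset.sum_add_distrib]
        apply Finset.sum_congr rfl
        intro mm _
        by_cases h1 : 3*mm + 2 ≤ n
        · rw [if_pos (by omega : 3*mm+2 ≤ n+1), if_pos h1, if_pos h1, if_neg (by omega)]
          have hl : n + 1 - (3*mm+2) = (n - (3*mm+2)) + 1 := by omega
          rw [hl]
          simp only [q]
          have a1 : e - (mm+2) - 1 = e - 1 - (mm+2) := by ring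
          have a2 : e - (mm+2) + 1 = e + 1 - (mm+2) := by ring
          have a3 : e + (mm+2) - 1 = e - 1 + (mm+2) := by ring
          have a4 : e + (mm+2) + 1 = e + 1 + (mm+2) := by ring
          rw [a1, a2, a3, a4]
          ring
        · by_cases h2 : 3*mm + 2 = n+1
          · rw [if_pos (by omega : 3*mm+2 ≤ n+1), if_neg h1, if_neg h1, if_pos h2]
            have hl : n + 1 - (3*mm+2) = 0 := by omega
            rw [hl]
            omega
          · rw [if_neg (by omega), if_neg h1, if_neg h1, if_neg h2]
      rw [hsplit]
      have hkey : c n (e-1) + c n (e+1) = c (n+1) e +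
          ∑ mm ∈ Finset.range (n+1+1), (if 3*mm + 2 = n+1 then
            a' mm * (q 0 (e - (mm+2)) + q 0 (e + (mm+2))) else 0) := by
        by_cases hA : 3 * |e| ≤ (n : ℤ) + 3
        · have hc : c (n+1) e = c n (e-1) + c n (e+1) := by
            simp only [c]; rw [if_pos hA]
          have hz : ∑ mm ∈ Finset.range (n+1+1), (if 3*mm + 2 = n+1 then
              a' mm * (q 0 (e - (mm+2)) + q 0 (e + (mm+2))) else 0) = 0 := by
            apply Finset.sum_eq_zero
            intro mm _
            split
            · rename_i h2
              have he1 : e - (mm+2) ≠ 0 := by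
                intro h0
                have : e = (mm:ℤ)+2 := by omega
                rw [this] at hA
                rw [abs_of_nonneg (by positivity)] at hA
                omega
              have he2 : e + (mm+2) ≠ 0 := by
                intro h0
                have : e = -((mm:ℤ)+2) := by omega
                rw [this] at hA
                rw [abs_neg, abs_of_nonneg (by positivity)] at hA
                omega
              rw [q_zero_of_ne he1, q_zero_of_ne he2]
              simp
            · rfl
          rw [hc, hz]
          omega
        · push_neg at hA
          have hc : c (n+1) e = 0 := by
            simp only [c]; rw [if_neg (by omega)]
          rw [hc]
          by_cases hB1 : 3 * |e| = (n : ℤ) + 5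
          · -- exactly the boundary-hit case
            have hn : ∃ m₀ : ℕ, n = 3*m₀ + 1 ∧ |e| = (m₀:ℤ) + 2 := by
              refine ⟨e.natAbs - 2, ?_, ?_⟩
              · have := Int.abs_eq_natAbs e
                omega
              · have := Int.abs_eq_natAbs e
                omega
            obtain ⟨m₀, hn, hm⟩ := hn
            have hsum : ∑ mm ∈ Finset.range (n+1+1), (if 3*mm + 2 = n+1 then
                a' mm * (q 0 (e - (mm+2)) + q 0 (e + (mm+2))) else 0)
                = a' m₀ * (q 0 (e - (m₀+2)) + q 0 (e + (m₀+2))) := by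
              rw [Finset.sum_eq_single m₀]
              · rw [if_pos (by omega)]
              · intro mm _ hne
                rw [if_neg (by omega)]
              · intro habs
                exact absurd (Finset.mem_range.2 (by omega)) habs
            rw [hsum]
            rcases abs_cases e with ⟨he, _⟩ | ⟨he, _⟩
            · -- e = m₀ + 2
              have he' : e = (m₀:ℤ) + 2 := by omega
              subst he'
              have hq1 : q 0 ((m₀:ℤ) + 2 - (m₀+2)) = 1 := by
                have : (m₀:ℤ) + 2 - (m₀+2) = 0 := by ring
                rw [this]; simp [q]
              have hq2 : q 0 ((m₀:ℤ) + 2 + (m₀+2)) = 0 := q_zero_of_ne (by omega)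
              have hc2 : c n ((m₀:ℤ) + 2 + 1) = 0 := by
                apply c_bound
                rw [abs_of_nonneg (by positivity)]
                omega
              have hc1 : c n ((m₀:ℤ) + 2 - 1) = a' m₀ := by
                have h1 : (m₀:ℤ) + 2 - 1 = ((m₀+1 : ℕ) : ℤ) := by push_cast; ring
                rw [h1, hn]
                rfl
              rw [hq1, hq2, hc1, hc2]
              ring
            · -- e = -(m₀ + 2)
              have he' : e = -((m₀:ℤ) + 2) := by omega
              subst he'
              have hq1 : q 0 (-((m₀:ℤ) + 2) - (m₀+2)) = 0 := q_zero_of_ne (by omega)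
              have hq2 : q 0 (-((m₀:ℤ) + 2) + (m₀+2)) = 1 := by
                have : -((m₀:ℤ) + 2) + (m₀+2) = 0 := by ring
                rw [this]; simp [q]
              have hc1 : c n (-((m₀:ℤ) + 2) - 1) = 0 := by
                have h1 : -((m₀:ℤ) + 2) - 1 = -((m₀:ℤ) + 3) := by ring
                rw [h1, c_neg]
                apply c_bound
                rw [abs_of_nonneg (by positivity)]
                omega
              have hc2 : c n (-((m₀:ℤ) + 2) + 1) = a' m₀ := by
                have h1 : -((m₀:ℤ) + 2) + 1 = -((m₀+1 : ℕ) : ℤ) := by push_cast; ring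
                rw [h1, c_neg, hn]
                rfl
              rw [hq1, hq2, hc1, hc2]
              ring
          · -- no boundary hit: everything vanishes
            have hsum : ∑ mm ∈ Finset.range (n+1+1), (if 3*mm + 2 = n+1 then
                a' mm * (q 0 (e - (mm+2)) + q 0 (e + (mm+2))) else 0) = 0 := by
              apply Finset.sum_eq_zero
              intro mm _
              split
              · rename_i h2
                have he1 : e - (mm+2) ≠ 0 := by
                  intro h0
                  have h3 : e = (mm:ℤ)+2 := by omega
                  rw [h3, abs_of_nonneg (by positivity)] at hB1 hA
                  omega
                have he2 : e + (mm+2) ≠ 0 := by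
                  intro h0
                  have h3 : e = -((mm:ℤ)+2) := by omega
                  rw [h3, abs_neg, abs_of_nonneg (by positivity)] at hB1 hA
                  omega
                rw [q_zero_of_ne he1, q_zero_of_ne he2]
                simp
              · rfl
            rw [hsum]
            have hc1 : c n (e-1) = 0 := by
              by_cases hB2 : 3 * |e| = (n:ℤ) + 4
              · apply c_parity
                rcases abs_cases e with ⟨he, _⟩ | ⟨he, _⟩ <;> omega
              · apply c_bound
                rcases abs_cases e with ⟨he, _⟩ | ⟨he, _⟩ <;>
                  rcases abs_cases (e-1) with ⟨h1, _⟩ | ⟨h1, _⟩ <;> omega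
            have hc2 : c n (e+1) = 0 := by
              by_cases hB2 : 3 * |e| = (n:ℤ) + 4
              · apply c_parity
                rcases abs_cases e with ⟨he, _⟩ | ⟨he, _⟩ <;> omega
              · apply c_bound
                rcases abs_cases e with ⟨he, _⟩ | ⟨he, _⟩ <;>
                  rcases abs_cases (e+1) with ⟨h1, _⟩ | ⟨h1, _⟩ <;> omega
            rw [hc1, hc2]
      omega


def walkSet (n : ℕ) (p : ℤ × ℤ) : Type :=
  {w : Fin (n+1) → ℤ × ℤ // IsKnightWalk n w ∧ w (Fin.last n) = p}

/-- the coordinates of a knight walk sum to `k + 2` at time `k`. -/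
lemma coord_sum {n : ℕ} {w : Fin (n+1) → ℤ × ℤ} (hw : IsKnightWalk n w) :
    ∀ k : Fin (n+1), (w k).1 + (w k).2 = (k : ℕ) + 2 := by
  intro k
  induction k using Fin.induction with
  | zero => rw [hw.1]; simp
  | succ i ih =>
      have hs := hw.2.1 i
      simp only [Set.mem_insert_iff, Set.mem_singleton_iff] at hs
      have h1 : (w i.succ).1 - (w i.castSucc).1 + ((w i.succ).2 - (w i.castSucc).2) = 1 := by
        rcases hs with h | h <;>
          rw [show (w i.succ).1 - (w i.castSucc).1 = (w i.succ - w i.castSucc).1 from rfl,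
            show (w i.succ).2 - (w i.castSucc).2 = (w i.succ - w i.castSucc).2 from rfl, h] <;> rfl
      have hc : ((i.succ : Fin (n+1)) : ℕ) = (i : ℕ) + 1 := Fin.val_succ i
      have hc2 : ((i.castSucc : Fin (n+1)) : ℕ) = (i : ℕ) := rfl
      rw [hc2] at ih
      rw [hc]
      push_cast at ih ⊢
      omega

/-- a knight walk is determined by its sequence of step choices. -/
lemma walk_determined {n : ℕ} {w w' : Fin (n+1) → ℤ × ℤ}
    (hw : IsKnightWalk n w) (hw' : IsKnightWalk n w')
    (h : ∀ k : Fin n, (w k.succ - w k.castSucc = ((-1 : ℤ), (2 : ℤ))) ↔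
        (w' k.succ - w' k.castSucc = ((-1 : ℤ), (2 : ℤ)))) : w = w' := by
  funext k
  induction k using Fin.induction with
  | zero => rw [hw.1, hw'.1]
  | succ i ih =>
      have hs := hw.2.1 i
      have hs' := hw'.2.1 i
      simp only [Set.mem_insert_iff, Set.mem_singleton_iff] at hs hs'
      have hstep : w i.succ - w i.castSucc = w' i.succ - w' i.castSucc := by
        rcases hs with h1 | h1
        · rw [h1, (h i).1 h1]
        · rcases hs' with h2 | h2
          · exfalso
            have := (h i).2 h2
            rw [h1] at this
            exact absurd this (by decide)
          · rw [h1, h2]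
      have := sub_eq_sub_iff_add_eq_add.mp hstep
      have hgoal : w i.succ = w' i.succ := by
        have : w i.succ + w' i.castSucc = w' i.succ + w i.castSucc := this
        rw [ih] at this
        exact add_right_cancel this
      exact hgoal

instance walkSet_finite (n : ℕ) (p : ℤ × ℤ) : Finite (walkSet n p) := by
  apply Finite.of_injective
    (fun w : walkSet n p => fun k : Fin n =>
      decide (w.1 k.succ - w.1 k.castSucc = ((-1 : ℤ), (2 : ℤ))))
  intro w w' hww
  apply Subtype.ext
  apply walk_determined w.2.1 w'.2.1
  intro k
  have := congrFun hww k
  simpa [decide_eq_decide] using this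

noncomputable def Nc (n : ℕ) (p : ℤ × ℤ) : ℕ := Nat.card (walkSet n p)

lemma Nc_zero (p : ℤ × ℤ) : Nc 0 p = if p = (1, 1) then 1 else 0 := by
  by_cases hp : p = (1, 1)
  · subst hp
    rw [if_pos rfl]
    unfold Nc
    rw [Nat.card_eq_one_iff_unique]
    constructor
    · constructor
      intro w w'
      apply Subtype.ext
      funext k
      have hk : k = 0 := Fin.fin_one_eq_zero k
      rw [hk, w.2.1.1, w'.2.1.1]
    · refine ⟨fun _ => (1, 1), ⟨⟨rfl, fun k => k.elim0, fun _ => by norm_num⟩, rfl⟩⟩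
  · rw [if_neg hp]
    have : IsEmpty (walkSet 0 p) := by
      constructor
      intro w
      apply hp
      rw [← w.2.2]
      exact w.2.1.1
    exact Nat.card_of_isEmpty

lemma Nc_of_neg {n : ℕ} {p : ℤ × ℤ} (hp : p.1 < 0 ∨ p.2 < 0) : Nc n p = 0 := by
  have : IsEmpty (walkSet n p) := by
    constructor
    intro w
    have := w.2.1.2.2 (Fin.last n)
    rw [w.2.2] at this
    rcases hp with h | h <;> omega
  exact Nat.card_of_isEmpty

lemma Nc_of_sum_ne {n : ℕ} {p : ℤ × ℤ} (hp : p.1 + p.2 ≠ (n : ℤ) + 2) : Nc n p = 0 := by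
  have : IsEmpty (walkSet n p) := by
    constructor
    intro w
    have := coord_sum w.2.1 (Fin.last n)
    rw [w.2.2] at this
    simp only [Fin.val_last] at this
    exact hp this
  exact Nat.card_of_isEmpty

/-- the truncation of a walk. -/
lemma trunc_walk {n : ℕ} {w : Fin (n+2) → ℤ × ℤ} (hw : IsKnightWalk (n+1) w) :
    IsKnightWalk n (w ∘ Fin.castSucc) := by
  refine ⟨?_, ?_, ?_⟩
  · show w (Fin.castSucc 0) = (1, 1)
    rw [Fin.castSucc_zero]
    exact hw.1
  · intro k
    have := hw.2.1 k.castSucc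
    rwa [Fin.succ_castSucc] at this
  · intro k
    exact hw.2.2 k.castSucc

lemma last_step {n : ℕ} {w : Fin (n+2) → ℤ × ℤ} (hw : IsKnightWalk (n+1) w) :
    w (Fin.last (n+1)) - w ((Fin.last n).castSucc) ∈ ({(-1, 2), (2, -1)} : Set (ℤ × ℤ)) := by
  have := hw.2.1 (Fin.last n)
  rwa [Fin.succ_last] at this

lemma psub1 (p : ℤ × ℤ) : p - ((-1:ℤ),(2:ℤ)) = p + ((1:ℤ),(-2:ℤ)) := by
  cases p with | mk a b => simp [Prod.ext_iff] <;> ring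

lemma psub2 (p : ℤ × ℤ) : p - ((2:ℤ),(-1:ℤ)) = p + ((-2:ℤ),(1:ℤ)) := by
  cases p with | mk a b => simp [Prod.ext_iff] <;> ring

lemma psub1' (p : ℤ × ℤ) : p - (p + ((1:ℤ),(-2:ℤ))) = ((-1:ℤ),(2:ℤ)) := by
  cases p with | mk a b => simp [Prod.ext_iff] <;> ring

lemma psub2' (p : ℤ × ℤ) : p - (p + ((-2:ℤ),(1:ℤ))) = ((2:ℤ),(-1:ℤ)) := by
  cases p with | mk a b => simp [Prod.ext_iff] <;> ring

/-- the extension of a walk by one step to a nonnegative point. -/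
lemma snoc_walk {n : ℕ} {v : Fin (n+1) → ℤ × ℤ} (hv : IsKnightWalk n v) (p : ℤ × ℤ)
    (hp1 : 0 ≤ p.1) (hp2 : 0 ≤ p.2)
    (hstep : p - v (Fin.last n) ∈ ({(-1, 2), (2, -1)} : Set (ℤ × ℤ))) :
    IsKnightWalk (n+1) (Fin.snoc v p) := by
  refine ⟨?_, ?_, ?_⟩
  · show (Fin.snoc v p : Fin (n+2) → ℤ × ℤ) 0 = (1, 1)
    rw [← hv.1, ← Fin.castSucc_zero]
    exact Fin.snoc_castSucc _ _ _
  · intro k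
    induction k using Fin.lastCases with
    | last =>
        rw [Fin.succ_last, Fin.snoc_last, Fin.snoc_castSucc]
        exact hstep
    | cast j =>
        rw [Fin.succ_castSucc, Fin.snoc_castSucc, Fin.snoc_castSucc]
        exact hv.2.1 j
  · intro k
    induction k using Fin.lastCases with
    | last => rw [Fin.snoc_last]; exact ⟨hp1, hp2⟩
    | cast j => rw [Fin.snoc_castSucc]; exact hv.2.2 j

/-- The fundamental recurrence for the number of walks. -/
lemma Nc_succ (n : ℕ) (p : ℤ × ℤ) (hp1 : 0 ≤ p.1) (hp2 : 0 ≤ p.2) :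
    Nc (n+1) p = Nc n (p + (1, -2)) + Nc n (p + (-2, 1)) := by
  have e : walkSet (n+1) p ≃ (walkSet n (p + (1, -2))) ⊕ (walkSet n (p + (-2, 1))) := by
    refine ⟨fun w => if h : w.1 (Fin.last (n+1)) - w.1 ((Fin.last n).castSucc)
        = ((-1 : ℤ), (2 : ℤ)) then
        Sum.inl ⟨w.1 ∘ Fin.castSucc, trunc_walk w.2.1, by
          show w.1 ((Fin.last n).castSucc) = p + (1, -2)
          have h2 := w.2.2
          rw [h2] at h
          rw [show w.1 ((Fin.last n).castSucc) = p - (-1, 2) from by rw [← h]; ring, psub1]⟩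
      else
        Sum.inr ⟨w.1 ∘ Fin.castSucc, trunc_walk w.2.1, by
          show w.1 ((Fin.last n).castSucc) = p + (-2, 1)
          have hmem := last_step w.2.1
          simp only [Set.mem_insert_iff, Set.mem_singleton_iff] at hmem
          rcases hmem with h1 | h1
          · exact absurd h1 h
          · rw [w.2.2] at h1
            rw [show w.1 ((Fin.last n).castSucc) = p - (2, -1) from by rw [← h1]; ring, psub2]⟩,
      fun v => Sum.rec
        (fun v => ⟨Fin.snoc v.1 p, snoc_walk v.2.1 p hp1 hp2 (by
            rw [v.2.2, psub1']; exact Set.mem_insert _ _), Fin.snoc_last _ _⟩)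
        (fun v => ⟨Fin.snoc v.1 p, snoc_walk v.2.1 p hp1 hp2 (by
            rw [v.2.2, psub2']; exact Set.mem_insert_of_mem _ rfl), Fin.snoc_last _ _⟩) v, ?_, ?_⟩
    · intro w
      dsimp only
      by_cases h : w.1 (Fin.last (n+1)) - w.1 ((Fin.last n).castSucc) = ((-1 : ℤ), (2 : ℤ))
      · rw [dif_pos h]
        apply Subtype.ext
        show (Fin.snoc (w.1 ∘ Fin.castSucc) p : Fin (n+2) → ℤ × ℤ) = w.1
        funext k
        induction k using Fin.lastCases with
        | last => rw [Fin.snoc_last, w.2.2]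
        | cast j => rw [Fin.snoc_castSucc]; rfl
      · rw [dif_neg h]
        apply Subtype.ext
        show (Fin.snoc (w.1 ∘ Fin.castSucc) p : Fin (n+2) → ℤ × ℤ) = w.1
        funext k
        induction k using Fin.lastCases with
        | last => rw [Fin.snoc_last, w.2.2]
        | cast j => rw [Fin.snoc_castSucc]; rfl
    · intro v
      rcases v with ⟨v, hv, hlast⟩ | ⟨v, hv, hlast⟩ <;> dsimp only
      · have hcond : (Fin.snoc v p : Fin (n+2) → ℤ × ℤ) (Fin.last (n+1)) -
            (Fin.snoc v p : Fin (n+2) → ℤ × ℤ) ((Fin.last n).castSucc) = ((-1 : ℤ), (2 : ℤ)) := by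
          rw [Fin.snoc_last, Fin.snoc_castSucc, hlast, psub1']
        rw [dif_pos hcond]
        congr 1
        apply Subtype.ext
        funext j
        show (Fin.snoc v p : Fin (n+2) → ℤ × ℤ) (Fin.castSucc j) = v j
        rw [Fin.snoc_castSucc]
      · have hcond : ¬ ((Fin.snoc v p : Fin (n+2) → ℤ × ℤ) (Fin.last (n+1)) -
            (Fin.snoc v p : Fin (n+2) → ℤ × ℤ) ((Fin.last n).castSucc) = ((-1 : ℤ), (2 : ℤ))) := by
          rw [Fin.snoc_last, Fin.snoc_castSucc, hlast, psub2']
          decide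
        rw [dif_neg hcond]
        congr 1
        apply Subtype.ext
        funext j
        show (Fin.snoc v p : Fin (n+2) → ℤ × ℤ) (Fin.castSucc j) = v j
        rw [Fin.snoc_castSucc]
  rw [Nc, Nat.card_congr e, Nat.card_sum]
  rfl

theorem Nc_eq_c : ∀ (n : ℕ) (p : ℤ × ℤ), 0 ≤ p.1 → 0 ≤ p.2 → p.1 + p.2 = (n : ℤ) + 2 →
    ∀ e : ℤ, p.1 - p.2 = 3 * e → Nc n p = c n e := by
  intro n
  induction n with
  | zero =>
      rintro ⟨a, b⟩ h1 h2 h3 e he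
      simp only at h1 h2 h3 he
      have hab : a = 1 ∧ b = 1 ∧ e = 0 := by push_cast at h3; omega
      obtain ⟨ha, hb, hE⟩ := hab
      subst ha; subst hb; subst hE
      rw [Nc_zero, if_pos rfl]
      simp [c]
  | succ n ih =>
      rintro ⟨a, b⟩ h1 h2 h3 e he
      simp only at h1 h2 h3 he
      rw [Nc_succ n (a, b) h1 h2]
      have hcrec : c (n+1) e = c n (e-1) + c n (e+1) := by
        simp only [c]
        rw [if_pos]
        rcases abs_cases e with ⟨hh, _⟩ | ⟨hh, _⟩ <;> push_cast <;> omega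
      rw [hcrec]
      have hadd1 : ((a, b) : ℤ × ℤ) + (1, -2) = (a + 1, b - 2) := by
        simp [Prod.ext_iff] <;> ring
      have hadd2 : ((a, b) : ℤ × ℤ) + (-2, 1) = (a - 2, b + 1) := by
        simp [Prod.ext_iff] <;> ring
      have hA : Nc n ((a, b) + (1, -2)) = c n (e+1) := by
        rw [hadd1]
        by_cases hb2 : 2 ≤ b
        · apply ih (a+1, b-2) (by simp; omega) (by simp; omega) (by simp; push_cast at h3 ⊢; omega)
          simp only
          omega
        · rw [Nc_of_neg (by simp; omega)]
          symm
          apply c_bound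
          have h5 : 0 < e + 1 := by omega
          rw [abs_of_pos h5]
          push_cast at h3 ⊢
          omega
      have hB : Nc n ((a, b) + (-2, 1)) = c n (e-1) := by
        rw [hadd2]
        by_cases ha2 : 2 ≤ a
        · apply ih (a-2, b+1) (by simp; omega) (by simp; omega) (by simp; push_cast at h3 ⊢; omega)
          simp only
          omega
        · rw [Nc_of_neg (by simp; omega)]
          symm
          apply c_bound
          have h5 : e - 1 < 0 := by omega
          rw [abs_of_neg h5]
          push_cast at h3 ⊢
          omega
      omega

lemma Q_eq_Nc (i j : ℕ) (h : 2 ≤ i + j) : Q i j = Nc (i + j - 2) ((i : ℤ), (j : ℤ)) := by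
  unfold Q Nc
  apply Nat.card_congr
  apply Equiv.symm
  refine Equiv.ofBijective (fun w : walkSet (i + j - 2) ((i : ℤ), (j : ℤ)) =>
    (⟨⟨i + j - 2, w.1⟩, w.2⟩ : {p : Σ n : ℕ, Fin (n + 1) → ℤ × ℤ //
      IsKnightWalk p.1 p.2 ∧ p.2 (Fin.last p.1) = ((i : ℤ), (j : ℤ))})) ⟨?_, ?_⟩
  · intro w w' hww
    have h1 := congrArg Subtype.val hww
    simp only at h1
    exact Subtype.ext (sigma_mk_injective h1)
  · rintro ⟨⟨n, w⟩, hw, hlast⟩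
    have hsum := coord_sum hw (Fin.last n)
    rw [hlast] at hsum
    simp only [Fin.val_last] at hsum
    have hn : n = i + j - 2 := by push_cast at hsum; omega
    subst hn
    exact ⟨⟨w, hw, hlast⟩, rfl⟩

lemma Q00 : Q 0 0 = 0 := by
  unfold Q
  have : IsEmpty {p : Σ n : ℕ, Fin (n + 1) → ℤ × ℤ //
      IsKnightWalk p.1 p.2 ∧ p.2 (Fin.last p.1) = ((0 : ℤ), (0 : ℤ))} := by
    constructor
    rintro ⟨⟨n, w⟩, hw, hlast⟩
    have hsum := coord_sum hw (Fin.last n)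
    rw [hlast] at hsum
    simp at hsum
    omega
  exact Nat.card_of_isEmpty

lemma Q_diag_eq (i : ℕ) (hi : 1 ≤ i) : Q i i = c (2*i - 2) 0 := by
  rw [Q_eq_Nc i i (by omega)]
  have : i + i - 2 = 2*i - 2 := by omega
  rw [this]
  apply Nc_eq_c _ _ (by positivity) (by positivity) (by push_cast; omega) 0 (by ring)

lemma Q_bdry_eq (mm : ℕ) : Q (3*(mm+1)) 0 = a' mm := by
  rw [Q_eq_Nc (3*(mm+1)) 0 (by omega)]
  have h1 : 3*(mm+1) + 0 - 2 = 3*mm + 1 := by omega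
  rw [h1]
  have h2 : Nc (3*mm+1) (((3*(mm+1) : ℕ) : ℤ), ((0:ℕ) : ℤ)) = c (3*mm+1) (mm+1) := by
    apply Nc_eq_c _ _ (by positivity) le_rfl (by push_cast; omega) ((mm : ℤ)+1) (by push_cast; ring)
  rw [h2]
  rfl

end KnightAux

namespace KnightAux

open PowerSeries

noncomputable def qser (h : ℕ) : PowerSeries ℚ := PowerSeries.mk fun n => (q n (h : ℤ) : ℚ)

noncomputable def Cser : PowerSeries ℚ := PowerSeries.mk fun n => (c n 0 : ℚ)

noncomputable def Tser : PowerSeries ℚ := PowerSeries.mk fun N =>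
  ∑ mm ∈ Finset.range (N+1), (a' mm : ℚ) *
    PowerSeries.coeff N (X^(3*mm+2) * qser (mm+2))

noncomputable def Vser (U : PowerSeries ℚ) : PowerSeries ℚ := PowerSeries.mk fun N =>
  ∑ mm ∈ Finset.range (N+1), (a' mm : ℚ) *
    PowerSeries.coeff N (X^(3*mm+2) * U^(mm+2))

section Hyps

variable {sq U : PowerSeries ℚ}
    (hsq1 : PowerSeries.constantCoeff sq = 1)
    (hsq : sq ^ 2 = 1 - 4 * PowerSeries.X ^ 2)
    (hU : 2 * PowerSeries.X * U = 1 - sq)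

include hU in
lemma sq_eq : sq = 1 - 2 * X * U := by linear_combination hU

include hsq hU in
lemma U_quad : U = X + X * U^2 := by
  have h4 : (4 : ℚ⟦X⟧) * X * (X*U^2 - U + X) = 0 := by
    have h1 : sq = 1 - 2*X*U := sq_eq hU
    linear_combination hsq - (sq + 1 - 2*X*U) * h1
  have h5 : (4 : ℚ⟦X⟧) * X ≠ 0 := by
    have h40 : (4 : ℚ⟦X⟧) ≠ 0 := by
      intro h
      have := congrArg (PowerSeries.constantCoeff) h
      rw [map_ofNat, map_zero] at this
      norm_num at this
    exact mul_ne_zero h40 PowerSeries.X_ne_zero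
  have := (mul_eq_zero.mp h4).resolve_left h5
  linear_combination - this

include hsq1 in
lemma sq_inv : sq * sq⁻¹ = 1 := PowerSeries.mul_inv_cancel _ (by rw [hsq1]; norm_num)

include hsq1 hU in
lemma sqinv_expand : sq⁻¹ = 1 + 2*X*(U*sq⁻¹) := by
  have h1 : sq * sq⁻¹ = 1 := sq_inv hsq1
  have h2 : sq = 1 - 2*X*U := sq_eq hU
  linear_combination h1 - sq⁻¹ * h2

lemma qser_zero_rec : qser 0 = 1 + 2*X*(qser 1) := by
  ext N
  rcases N with _ | n
  · simp [qser, q, PowerSeries.coeff_zero_eq_constantCoeff]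
  · rw [map_add, show (2:ℚ⟦X⟧)*X*(qser 1) = X*(qser 1) + X*(qser 1) by ring, map_add,
      coeff_succ_X_mul]
    simp only [qser, coeff_mk, coeff_one]
    have h0 : q (n+1) ((0:ℕ) : ℤ) = q n (0 - 1) + q n (0 + 1) := by
      norm_num
      rfl
    rw [h0]
    have h1 : (0:ℤ) - 1 = -(1:ℤ) := by ring
    rw [h1, q_neg]
    push_cast
    ring

lemma qser_succ_rec (h : ℕ) : qser (h+1) = X * (qser h + qser (h+2)) := by
  ext N
  rcases N with _ | n
  · have h0 : q 0 ((h:ℤ) + 1) = 0 := q_zero_of_ne (by omega)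
    simp [qser, PowerSeries.coeff_zero_eq_constantCoeff, h0]
  · rw [coeff_succ_X_mul, map_add]
    simp only [qser, coeff_mk]
    have : q (n+1) ((h+1 : ℕ) : ℤ) = q n (((h+1:ℕ):ℤ) - 1) + q n (((h+1:ℕ):ℤ) + 1) := rfl
    rw [this]
    have h1 : ((h+1:ℕ):ℤ) - 1 = ((h:ℕ):ℤ) := by push_cast; ring
    have h2 : ((h+1:ℕ):ℤ) + 1 = ((h+2:ℕ):ℤ) := by push_cast; ring
    rw [h1, h2]
    push_cast
    ring

include hsq1 hsq hU in
lemma qser_eq (h : ℕ) : qser h = U^h * sq⁻¹ := by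
  set D : ℕ → ℚ⟦X⟧ := fun h => qser h - U^h * sq⁻¹ with hD
  have hD0 : D 0 = X * (D 1 + D 1) := by
    have h1 := qser_zero_rec
    have h2 := sqinv_expand hsq1 hU
    simp only [hD]
    rw [pow_zero, pow_one]
    linear_combination h1 - h2
  have hDrec : ∀ h : ℕ, D (h+1) = X * (D h + D (h+2)) := by
    intro h
    have h1 := qser_succ_rec h
    have h2 : U^(h+1) * sq⁻¹ = X * (U^h * sq⁻¹ + U^(h+2) * sq⁻¹) := by
      have h3 := U_quad hsq hU
      have expand : U^(h+1) = U^h * U := pow_succ U h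
      calc U^(h+1) * sq⁻¹ = U^h * U * sq⁻¹ := by rw [expand]
        _ = U^h * (X + X*U^2) * sq⁻¹ := by rw [← h3]
        _ = X * (U^h * sq⁻¹ + U^(h+2) * sq⁻¹) := by ring
    simp only [hD]
    linear_combination h1 - h2
  have key : ∀ N : ℕ, ∀ h : ℕ, coeff N (D h) = 0 := by
    intro N
    induction N with
    | zero =>
        intro h
        rcases h with _ | h
        · rw [hD0, PowerSeries.coeff_zero_eq_constantCoeff]
          simp
        · rw [hDrec h, PowerSeries.coeff_zero_eq_constantCoeff]
          simp
    | succ n ih =>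
        intro h
        rcases h with _ | h
        · rw [hD0, coeff_succ_X_mul, map_add, ih 1]
          norm_num
        · rw [hDrec h, coeff_succ_X_mul, map_add, ih h, ih (h+2)]
          norm_num
  have : D h = 0 := by
    ext N
    rw [key N h]
    simp
  have := sub_eq_zero.mp this
  exact this

lemma step1 : diagSer = X^4 * Cser := by
  ext N
  rw [coeff_X_pow_mul']
  simp only [diagSer, Cser, coeff_mk]
  by_cases h4 : 4 ≤ N
  · rw [if_pos h4]
    by_cases he : N % 2 = 0
    · rw [if_pos ⟨by omega, he⟩]
      have hi : 1 ≤ (N-2)/2 := by omega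
      rw [Q_diag_eq _ hi]
      have : 2*((N-2)/2) - 2 = N - 4 := by omega
      rw [this]
    · rw [if_neg (by omega)]
      have : c (N-4) 0 = 0 := by
        apply c_parity
        intro hdvd
        have : (2:ℤ) ∣ ((N:ℤ) - 4) → False := by omega
        apply this
        have h5 : (0:ℤ) - ((N-4 : ℕ):ℤ) = -(((N-4):ℕ):ℤ) := by ring
        rw [h5, dvd_neg] at hdvd
        push_cast at hdvd ⊢
        omega
      rw [this]
      norm_num
  · rw [if_neg h4]
    interval_cases N <;> simp [Q00]

include hsq1 hsq hU in
lemma Tser_eq : Tser = PowerSeries.mk fun N =>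
    ∑ mm ∈ Finset.range (N+1), (a' mm : ℚ) *
      PowerSeries.coeff N (X^(3*mm+2) * (U^(mm+2) * sq⁻¹)) := by
  unfold Tser
  ext N
  rw [coeff_mk, coeff_mk]
  apply Finset.sum_congr rfl
  intro mm _
  rw [qser_eq hsq1 hsq hU]

lemma coeff_two_mul (N : ℕ) (f : PowerSeries ℚ) :
    PowerSeries.coeff N (2 * f) = 2 * PowerSeries.coeff N f := by
  rw [show (2:ℚ⟦X⟧) * f = f + f by ring, map_add]
  ring

lemma step2 : qser 0 = Cser + 2 * Tser := by
  ext N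
  rw [map_add, coeff_two_mul]
  simp only [qser, Cser, Tser, coeff_mk, Nat.cast_zero]
  have hz := zeta N 0
  have hcast := congrArg (fun x : ℕ => (x : ℚ)) hz
  simp only [Nat.cast_add, Nat.cast_sum] at hcast
  rw [hcast, Finset.mul_sum]
  congr 1
  apply Finset.sum_congr rfl
  intro mm _
  rw [coeff_X_pow_mul']
  by_cases h : 3*mm + 2 ≤ N
  · rw [if_pos h, if_pos h]
    simp only [qser, coeff_mk]
    have h1 : (0:ℤ) - ((mm:ℤ)+2) = -(((mm+2:ℕ)):ℤ) := by push_cast; ring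
    have h2 : (0:ℤ) + ((mm:ℤ)+2) = (((mm+2:ℕ)):ℤ) := by push_cast; ring
    rw [h1, h2, q_neg]
    push_cast
    ring
  · rw [if_neg h, if_neg h]
    push_cast
    ring

include hsq1 hsq hU in
lemma step3 : Tser * sq = Vser U := by
  rw [Tser_eq hsq1 hsq hU]
  ext N
  rw [PowerSeries.coeff_mul]
  have hstep : ∀ p ∈ Finset.HasAntidiagonal.antidiagonal N,
      (PowerSeries.coeff p.1 (PowerSeries.mk fun M =>
        ∑ mm ∈ Finset.range (M+1), (a' mm : ℚ) *
          PowerSeries.coeff M (X^(3*mm+2) * (U^(mm+2) * sq⁻¹)))) * PowerSeries.coeff p.2 sq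
      = ∑ mm ∈ Finset.range (N+1), (a' mm : ℚ) *
          (PowerSeries.coeff p.1 (X^(3*mm+2) * (U^(mm+2) * sq⁻¹)) * PowerSeries.coeff p.2 sq) := by
    intro p hp
    rw [coeff_mk]
    have hp1 : p.1 ≤ N := by
      rw [Finset.HasAntidiagonal.mem_antidiagonal] at hp
      omega
    rw [Finset.sum_subset (by
        apply Finset.range_subset_range.2
        omega : Finset.range (p.1+1) ⊆ Finset.range (N+1))]
    · rw [Finset.sum_mul]
      apply Finset.sum_congr rfl
      intro mm _
      ring
    · intro mm _ hmm
      rw [Finset.mem_range, not_lt] at hmm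
      rw [coeff_X_pow_mul', if_neg (show ¬ (3*mm+2 ≤ p.1) by omega)]
      ring
  rw [Finset.sum_congr rfl hstep, Finset.sum_comm]
  simp only [Vser, coeff_mk]
  apply Finset.sum_congr rfl
  intro mm _
  rw [← Finset.mul_sum, ← PowerSeries.coeff_mul]
  have hinv : sq⁻¹ * sq = 1 := by rw [mul_comm]; exact sq_inv hsq1
  have hser : (X^(3*mm+2) * (U^(mm+2) * sq⁻¹)) * sq = (X:ℚ⟦X⟧)^(3*mm+2) * U^(mm+2) := by
    linear_combination ((X : ℚ⟦X⟧)^(3*mm+2) * U^(mm+2)) * hinv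
  rw [hser]

lemma coeff_X3U_pow (U : PowerSeries ℚ) (N k : ℕ) :
    PowerSeries.coeff N ((X^3 * U)^k) =
      if 3*k ≤ N then PowerSeries.coeff (N - 3*k) (U^k) else 0 := by
  rw [mul_pow, ← pow_mul, coeff_X_pow_mul']

lemma step4 : composePS Sser (X^3 * U) = X^4 * Vser U := by
  ext N
  have lhs : PowerSeries.coeff N (composePS Sser (X^3 * U)) =
      ∑ mm ∈ Finset.range (N+1), (a' mm : ℚ) *
        (if 3*(mm+2) ≤ N then PowerSeries.coeff (N - 3*(mm+2)) (U^(mm+2)) else 0) := by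
    unfold composePS
    rw [coeff_mk, map_sum]
    have hterm : ∀ k ∈ Finset.range (N+1),
        PowerSeries.coeff N (PowerSeries.C (PowerSeries.coeff k Sser) * (X^3*U)^k)
        = (PowerSeries.coeff k Sser) * (if 3*k ≤ N then PowerSeries.coeff (N - 3*k) (U^k) else 0) := by
      intro k _
      rw [coeff_C_mul, coeff_X3U_pow]
    rw [Finset.sum_congr rfl hterm]
    set f : ℕ → ℚ := fun k => (PowerSeries.coeff k Sser) *
        (if 3*k ≤ N then PowerSeries.coeff (N - 3*k) (U^k) else 0) with hf
    have hext : ∑ k ∈ Finset.range (N+1), f k = ∑ k ∈ Finset.range (N+3), f k := by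
      rw [Finset.sum_subset ((Finset.range_subset_range).2 (by omega) :
        Finset.range (N+1) ⊆ Finset.range (N+3))]
      intro k _ hk
      rw [Finset.mem_range, not_lt] at hk
      simp only [hf]
      rw [if_neg (show ¬ (3*k ≤ N) by omega)]
      ring
    rw [hext, Finset.sum_range_succ', Finset.sum_range_succ']
    have hf0 : f 0 = 0 := by
      simp only [hf, Sser, coeff_mk]
      norm_num
    have hf1 : f 1 = 0 := by
      simp only [hf, Sser, coeff_mk]
      norm_num [Q00]
    rw [hf0, hf1, add_zero, add_zero]
    apply Finset.sum_congr rfl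
    intro mm _
    simp only [hf, Sser, coeff_mk]
    rw [if_pos (by omega : 1 ≤ mm + 1 + 1)]
    have : 3 * (mm + 1 + 1 - 1) = 3*(mm+1) := by omega
    rw [this, Q_bdry_eq]
  rw [lhs, coeff_X_pow_mul']
  by_cases h4 : 4 ≤ N
  · rw [if_pos h4]
    simp only [Vser, coeff_mk]
    rw [Finset.sum_subset (by apply Finset.range_subset_range.2; omega :
        Finset.range (N-4+1) ⊆ Finset.range (N+1))]
    · apply Finset.sum_congr rfl
      intro mm _
      congr 1
      rw [coeff_X_pow_mul']
      by_cases h : 3*(mm+2) ≤ N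
      · rw [if_pos h, if_pos (show 3*mm+2 ≤ N-4 by omega)]
        have hidx : N - 4 - (3*mm+2) = N - 3*(mm+2) := by omega
        rw [hidx]
      · rw [if_neg h, if_neg (show ¬ (3*mm+2 ≤ N-4) by omega)]
    · intro mm _ hmm
      rw [Finset.mem_range, not_lt] at hmm
      rw [coeff_X_pow_mul', if_neg (show ¬ (3*mm+2 ≤ N-4) by omega)]
      ring
  · rw [if_neg h4]
    apply Finset.sum_eq_zero
    intro mm _
    rw [if_neg (show ¬ (3*(mm+2) ≤ N) by omega)]
    ring

end Hyps

end KnightAux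

/-- If `sq = √(1 − 4t²)` is the power series with constant term `1` whose square is
`1 − 4t²`, and `U(t) = (1 − √(1 − 4t²))/(2t)`, then
`∑_{i ≥ 0} Q_{i,i} t^{2i+2} = (t⁴ − 2 S(t³ U(t))) / √(1 − 4t²)` in `ℚ[[t]]`. -/
theorem knight_diagonal_identity (sq U : PowerSeries ℚ)
    (hsq1 : PowerSeries.constantCoeff sq = 1)
    (hsq : sq ^ 2 = 1 - 4 * PowerSeries.X ^ 2)
    (hU : 2 * PowerSeries.X * U = 1 - sq) :
    diagSer = (PowerSeries.X ^ 4 -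
      2 * composePS Sser (PowerSeries.X ^ 3 * U)) * sq⁻¹ := by
  have h1 := KnightAux.step1
  have h2 := KnightAux.step2
  have h3 := KnightAux.step3 hsq1 hsq hU
  have h4 := KnightAux.step4 (U := U)
  have hq0 : KnightAux.qser 0 = sq⁻¹ := by
    have := KnightAux.qser_eq hsq1 hsq hU 0
    rwa [pow_zero, one_mul] at this
  have hinv : sq * sq⁻¹ = 1 := KnightAux.sq_inv hsq1
  have hC : KnightAux.Cser * sq = 1 - 2 * KnightAux.Vser U := by
    have hq0sq : KnightAux.qser 0 * sq = 1 := by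
      rw [hq0, mul_comm]
      exact hinv
    linear_combination (-sq) * h2 + hq0sq + (-2) * h3
  have main' : diagSer * sq = PowerSeries.X ^ 4 -
      2 * composePS Sser (PowerSeries.X ^ 3 * U) := by
    rw [h1, h4]
    linear_combination (PowerSeries.X^4) * hC
  calc diagSer = diagSer * (sq * sq⁻¹) := by rw [hinv, mul_one]
    _ = (diagSer * sq) * sq⁻¹ := by ring
    _ = _ := by rw [main']
end
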